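/- For every edge {a,b} ⊆ {1,…,7} (a ≠ b), the edge vector e_{ab} ∈ F^{21} is nonzero; more precisely, for a 5-element subset u ⊆ {1,…,7} one has e_{ab}(u) ≠ 0 if and only if both a ∈ u and b ∈ u. Consequently, for every edge of ∂Δ⁶ there exists a nonzero permitted coloring of ∂Δ⁶ (namely e_{ab}) whose support consists exactly of the pentachora containing that edge, where x ∈ F^{21} is called a permitted coloring of ∂Δ⁶ if for every p ∈ {1,…,7}, writing {1,…,7}\{p} = {q₁ < q₂ < q₃ < q₄ < q₅ < q₆}, one has (x(u_{q₁}^p), x(u_{q₂}^p), x(u_{q₃}^p)) · A^{(p)}[(q₁,q₂,q₃)→(q₄,q₅,q₆)] = (x(u_{q₄}^p), x(u_{q₅}^p), x(u_{q₆}^p)). -/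

import Mathlib

/-- The determinant `d_{ijk}` built from the columns `(α_i,β_i,γ_i)`, `(α_j,β_j,γ_j)`,
`(α_k,β_k,γ_k)`. -/
noncomputable def dd {F : Type*} [Field F] (al be ga : Fin 7 → F) (i j k : Fin 7) : F :=
  Matrix.det !![al i, al j, al k; be i, be j, be k; ga i, ga j, ga k]

/-- The ansatz matrix `A^{(p)}[(i₁,i₂,i₃)→(o₁,o₂,o₃)]`. -/
noncomputable def ansatz {F : Type*} [Field F] (al be ga : Fin 7 → F) (p : Fin 7)
    (inp out : Fin 3 → Fin 7) : Matrix (Fin 3) (Fin 3) F := fun a b =>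
  dd al be ga (inp (a + 1)) (out b) p * dd al be ga (inp (a + 2)) (out b) p /
    (dd al be ga (inp a) (inp (a + 1)) p * dd al be ga (inp a) (inp (a + 2)) p)

/-- The 5-element subsets of `{1,…,7}` (pentachora of `∂Δ⁶`). -/
def Pent : Type := {u : Finset (Fin 7) // u.card = 5}

/-- The edge vector `e_{ab}` evaluated at a subset `u ⊆ {1,…,7}`. -/
noncomputable def eVec {F : Type*} [Field F] (al be ga : Fin 7 → F) (a b : Fin 7)
    (u : Finset (Fin 7)) : F :=
  if a ∈ u ∧ b ∈ u then
    dd al be ga a ((uᶜ.sort (· ≤ ·)).getD 0 a) ((uᶜ.sort (· ≤ ·)).getD 1 a) *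
      dd al be ga b ((uᶜ.sort (· ≤ ·)).getD 0 a) ((uᶜ.sort (· ≤ ·)).getD 1 a)
  else 0

/-- `qs p` enumerates `{1,…,7} \ {p}` in increasing order: `q₁ < q₂ < ⋯ < q₆`. -/
def qs (p : Fin 7) (n : Fin 6) : Fin 7 :=
  if (n : ℕ) < (p : ℕ) then ⟨(n : ℕ), by have := n.isLt; omega⟩
  else ⟨(n : ℕ) + 1, by have := n.isLt; omega⟩

lemma qs_ne (p : Fin 7) (n : Fin 6) : qs p n ≠ p := by
  unfold qs
  split <;> (intro h; have := congrArg Fin.val h; simp at this; omega)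

/-- `u_q^p := {1,…,7} \ {p,q}` as a pentachoron. -/
def uPent (p q : Fin 7) (h : q ≠ p) : Pent :=
  ⟨({p, q} : Finset (Fin 7))ᶜ, by
    rw [Finset.card_compl, Finset.card_pair (Ne.symm h)]
    decide⟩

/-- `x : Pent → F` is a permitted coloring of `∂Δ⁶` if for every `p`, writing
`{1,…,7} \ {p} = {q₁ < ⋯ < q₆}`, the row `(x(u_{q₁}^p), x(u_{q₂}^p), x(u_{q₃}^p))` is
carried by `A^{(p)}[(q₁,q₂,q₃)→(q₄,q₅,q₆)]` to `(x(u_{q₄}^p), x(u_{q₅}^p), x(u_{q₆}^p))`. -/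
noncomputable def Permitted {F : Type*} [Field F] (al be ga : Fin 7 → F)
    (x : Pent → F) : Prop :=
  ∀ p : Fin 7,
    Matrix.vecMul
        (fun n : Fin 3 => x (uPent p (qs p ⟨(n : ℕ), by have := n.isLt; omega⟩)
          (qs_ne p _)))
        (ansatz al be ga p
          (fun n : Fin 3 => qs p ⟨(n : ℕ), by have := n.isLt; omega⟩)
          (fun n : Fin 3 => qs p ⟨(n : ℕ) + 3, by have := n.isLt; omega⟩)) =
      fun n : Fin 3 => x (uPent p (qs p ⟨(n : ℕ) + 3, by have := n.isLt; omega⟩)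
        (qs_ne p _))

/- ### Auxiliary lemmas -/

lemma pluck {F : Type*} [Field F] (al be ga : Fin 7 → F) (x y z w p : Fin 7) :
    dd al be ga x y p * dd al be ga z w p - dd al be ga x z p * dd al be ga y w p
      + dd al be ga x w p * dd al be ga y z p = 0 := by
  simp [dd, Matrix.det_fin_three]; ring

lemma dd_prod_swap {F : Type*} [Field F] (al be ga : Fin 7 → F) (x y u v : Fin 7) :
    dd al be ga x u v * dd al be ga y u v = dd al be ga x v u * dd al be ga y v u := by
  simp [dd, Matrix.det_fin_three]; ring

lemma dd_swap12 {F : Type*} [Field F] (al be ga : Fin 7 → F) (x y z : Fin 7) :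
    dd al be ga x y z = - dd al be ga y x z := by
  simp [dd, Matrix.det_fin_three]; ring

lemma dd_xxy {F : Type*} [Field F] (al be ga : Fin 7 → F) (x y : Fin 7) :
    dd al be ga x x y = 0 := by
  simp [dd, Matrix.det_fin_three]

lemma dd_xyx {F : Type*} [Field F] (al be ga : Fin 7 → F) (x y : Fin 7) :
    dd al be ga x y x = 0 := by
  simp [dd, Matrix.det_fin_three]

lemma pair_sort_le {p q : Fin 7} (h : p ≤ q) (hne : p ≠ q) :
    ({p, q} : Finset (Fin 7)).sort (· ≤ ·) = [p, q] := by
  rw [Finset.sort_insert]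
  · rw [Finset.sort_singleton]
  · intro b hb; simp at hb; subst hb; exact h
  · simp [hne]

lemma pair_sort (p q : Fin 7) (hne : p ≠ q) :
    ({p, q} : Finset (Fin 7)).sort (· ≤ ·) = [p, q] ∨
    ({p, q} : Finset (Fin 7)).sort (· ≤ ·) = [q, p] := by
  rcases le_total p q with h | h
  · exact Or.inl (pair_sort_le h hne)
  · right; rw [Finset.pair_comm]; exact pair_sort_le h (Ne.symm hne)

/-- Uniform evaluation of the edge vector on the pentachoron `u_q^p`. -/
lemma eVec_uPent {F : Type*} [Field F] (al be ga : Fin 7 → F) (a b p q : Fin 7)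
    (h : q ≠ p) :
    eVec al be ga a b (uPent p q h).1 = dd al be ga a p q * dd al be ga b p q := by
  have hpq : p ≠ q := Ne.symm h
  have hneg : ¬(a ∈ ({p, q} : Finset (Fin 7))ᶜ ∧ b ∈ ({p, q} : Finset (Fin 7))ᶜ) →
      (0 : F) = dd al be ga a p q * dd al be ga b p q := by
    intro hm
    rcases not_and_or.mp hm with hm | hm <;> rw [Finset.mem_compl, not_not] at hm <;>
      simp only [Finset.mem_insert, Finset.mem_singleton] at hm <;>
      rcases hm with rfl | rfl <;> simp [dd_xxy, dd_xyx]
  unfold eVec uPent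
  simp only [compl_compl]
  rcases pair_sort p q hpq with hs | hs <;> rw [hs] <;> split_ifs with hm
  · simp only [List.getD_cons_zero, List.getD_cons_succ]
  · exact hneg hm
  · simp only [List.getD_cons_zero, List.getD_cons_succ]
    exact dd_prod_swap al be ga a b q p
  · exact hneg hm

lemma qs_inj (p : Fin 7) (m n : Fin 6) (h : (m : ℕ) ≠ (n : ℕ)) : qs p m ≠ qs p n := by
  unfold qs
  split_ifs <;> (intro he; have := congrArg Fin.val he; simp at this; omega)

/-- The key bracket identity behind permittedness, valid for arbitrary `a`, `b`. -/
lemma key {F : Type*} [Field F] (al be ga : Fin 7 → F)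
    (hgen : ∀ i j k : Fin 7, i ≠ j → i ≠ k → j ≠ k → dd al be ga i j k ≠ 0)
    (p a b i₁ i₂ i₃ o : Fin 7)
    (h12 : i₁ ≠ i₂) (h13 : i₁ ≠ i₃) (h23 : i₂ ≠ i₃)
    (h1p : i₁ ≠ p) (h2p : i₂ ≠ p) (h3p : i₃ ≠ p) :
    dd al be ga a p i₁ * dd al be ga b p i₁ *
        (dd al be ga i₂ o p * dd al be ga i₃ o p /
          (dd al be ga i₁ i₂ p * dd al be ga i₁ i₃ p))
      + dd al be ga a p i₂ * dd al be ga b p i₂ *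
        (dd al be ga i₃ o p * dd al be ga i₁ o p /
          (dd al be ga i₂ i₃ p * dd al be ga i₂ i₁ p))
      + dd al be ga a p i₃ * dd al be ga b p i₃ *
        (dd al be ga i₁ o p * dd al be ga i₂ o p /
          (dd al be ga i₃ i₁ p * dd al be ga i₃ i₂ p))
      = dd al be ga a p o * dd al be ga b p o := by
  rw [dd_prod_swap al be ga a b p i₁, dd_prod_swap al be ga a b p i₂,
    dd_prod_swap al be ga a b p i₃, dd_prod_swap al be ga a b p o,
    dd_swap12 al be ga i₂ i₁ p, dd_swap12 al be ga i₃ i₁ p, dd_swap12 al be ga i₃ i₂ p]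
  have n12 : dd al be ga i₁ i₂ p ≠ 0 := hgen _ _ _ h12 h1p h2p
  have n13 : dd al be ga i₁ i₃ p ≠ 0 := hgen _ _ _ h13 h1p h3p
  have n23 : dd al be ga i₂ i₃ p ≠ 0 := hgen _ _ _ h23 h2p h3p
  set A1 := dd al be ga a i₁ p
  set A2 := dd al be ga a i₂ p
  set A3 := dd al be ga a i₃ p
  set Ao := dd al be ga a o p
  set B1 := dd al be ga b i₁ p
  set B2 := dd al be ga b i₂ p
  set B3 := dd al be ga b i₃ p
  set Bo := dd al be ga b o p
  set O1 := dd al be ga i₁ o p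
  set O2 := dd al be ga i₂ o p
  set O3 := dd al be ga i₃ o p
  set P12 := dd al be ga i₁ i₂ p
  set P13 := dd al be ga i₁ i₃ p
  set P23 := dd al be ga i₂ i₃ p
  have hA := pluck al be ga a i₁ i₂ i₃ p
  have hB := pluck al be ga b i₁ i₂ i₃ p
  have hO := pluck al be ga i₁ i₂ i₃ o p
  have hAo := pluck al be ga a i₁ i₂ o p
  have hBo := pluck al be ga b i₁ i₃ o p
  have hE : A1*B1*O2*O3*P23 - A2*B2*O1*O3*P13 + A3*B3*O1*O2*P12 - Ao*Bo*P12*P13*P23 = 0 := by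
    simp only [A1, A2, A3, Ao, B1, B2, B3, Bo, O1, O2, O3, P12, P13, P23]
    linear_combination (B3*O2*O1) * hA + (A2*O3*O1) * hB
      + (-A2*B3*O1) * hO + (-Bo*P13*P23) * hAo
      + (-(A2*O1-A1*O2)*P23) * hBo
  field_simp
  linear_combination hE

/-- For every edge `{a,b}`, the edge vector `e_{ab} ∈ F^{21}` is nonzero at a 5-element
subset `u` exactly when `a, b ∈ u`; in particular it is a nonzero permitted coloring of
`∂Δ⁶` whose support consists exactly of the pentachora containing the edge `{a,b}`. -/
theorem edgeVector_nonzero_support_and_permitted {F : Type*} [Field F]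
    (al be ga : Fin 7 → F)
    (hgen : ∀ i j k : Fin 7, i ≠ j → i ≠ k → j ≠ k → dd al be ga i j k ≠ 0)
    (a b : Fin 7) (hab : a ≠ b) :
    (∀ u : Pent, eVec al be ga a b u.1 ≠ 0 ↔ (a ∈ u.1 ∧ b ∈ u.1)) ∧
    (fun u : Pent => eVec al be ga a b u.1) ≠ 0 ∧
    Permitted al be ga (fun u : Pent => eVec al be ga a b u.1) := by
  have h1 : ∀ u : Pent, eVec al be ga a b u.1 ≠ 0 ↔ (a ∈ u.1 ∧ b ∈ u.1) := by
    intro u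
    constructor
    · intro h
      by_contra hc
      apply h
      unfold eVec
      rw [if_neg hc]
    · rintro ⟨ha, hb⟩
      unfold eVec
      rw [if_pos ⟨ha, hb⟩]
      have hcard : u.1ᶜ.card = 2 := by
        rw [Finset.card_compl, u.2]; rfl
      have hlen : (u.1ᶜ.sort (· ≤ ·)).length = 2 := by
        rw [Finset.length_sort, hcard]
      obtain ⟨s, t, hl⟩ : ∃ s t, u.1ᶜ.sort (· ≤ ·) = [s, t] := by
        rcases hl' : u.1ᶜ.sort (· ≤ ·) with _ | ⟨s, _ | ⟨t, _ | _⟩⟩ <;>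
          rw [hl'] at hlen <;> simp at hlen
        exact ⟨s, t, rfl⟩
      have hsmem : s ∈ u.1ᶜ := (Finset.mem_sort _).mp (by rw [hl]; simp)
      have htmem : t ∈ u.1ᶜ := (Finset.mem_sort _).mp (by rw [hl]; simp)
      have hnd := Finset.sort_nodup u.1ᶜ (· ≤ ·)
      rw [hl] at hnd
      have hst : s ≠ t := by simpa using hnd
      rw [Finset.mem_compl] at hsmem htmem
      have has : a ≠ s := fun h => hsmem (h ▸ ha)
      have hat : a ≠ t := fun h => htmem (h ▸ ha)
      have hbs : b ≠ s := fun h => hsmem (h ▸ hb)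
      have hbt : b ≠ t := fun h => htmem (h ▸ hb)
      rw [hl]
      simp only [List.getD_cons_zero, List.getD_cons_succ]
      exact mul_ne_zero (hgen a s t has hat hst) (hgen b s t hbs hbt hst)
  refine ⟨h1, ?_, ?_⟩
  · -- nonzero: find a pentachoron containing a and b
    have hc5 : ({a, b} : Finset (Fin 7))ᶜ.card = 5 := by
      rw [Finset.card_compl, Finset.card_pair hab]; rfl
    have h2lt : 1 < ({a, b} : Finset (Fin 7))ᶜ.card := by rw [hc5]; omega
    obtain ⟨s, hs, t, ht, hst⟩ := Finset.one_lt_card.mp h2lt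
    rw [Finset.mem_compl] at hs ht
    simp only [Finset.mem_insert, Finset.mem_singleton] at hs ht
    push_neg at hs ht
    have hts : t ≠ s := Ne.symm hst
    intro h0
    have := congrFun h0 (uPent s t hts)
    simp only [Pi.zero_apply] at this
    apply (h1 (uPent s t hts)).mpr ?_ this
    constructor <;>
    · show _ ∈ ({s, t} : Finset (Fin 7))ᶜ
      rw [Finset.mem_compl]
      simp only [Finset.mem_insert, Finset.mem_singleton]
      push_neg
      first
      | exact ⟨Ne.symm hs.1, Ne.symm ht.1⟩
      | exact ⟨Ne.symm hs.2, Ne.symm ht.2⟩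
  · -- permitted
    intro p
    funext n
    simp only [Matrix.vecMul, dotProduct, Fin.sum_univ_three, ansatz, eVec_uPent]
    fin_cases n <;>
      simp only [Fin.isValue, eVec_uPent] <;>
      · apply key al be ga hgen p a b (qs p ⟨0, by omega⟩) (qs p ⟨1, by omega⟩)
          (qs p ⟨2, by omega⟩) _
          (qs_inj p _ _ (by simp)) (qs_inj p _ _ (by simp)) (qs_inj p _ _ (by simp))
          (qs_ne p _) (qs_ne p _) (qs_ne p _)
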